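/- Let x be a positive irrational real number with x > 1, let p be a prime with p < x, assume x < N_p, and let k be an integer with 1 ≤ k ≤ p−1. Then |S_x(kN_p − x, kN_p)| − |S_x(0, x)| = Σ μ(a), the sum taken over all squarefree positive integers a < px such that p divides a, every prime factor of a is less than x, and {x/a} > {kN_p/a}. -/

import Mathlib

open scoped Classical
open Finset ArithmeticFunction

noncomputable section

/-- Sum of the Möbius function over positive integers `a` in the open interval `(u, v)`
that are *not* divisible by `p`. -/
def Mp' (p : ℕ) (u v : ℝ) : ℤ :=
  ∑ a ∈ (Finset.Icc 1 ⌈v⌉₊).filter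
      (fun a : ℕ => u < (a : ℝ) ∧ (a : ℝ) < v ∧ ¬ p ∣ a),
    ArithmeticFunction.moebius a

/-- Sum of the Möbius function over positive integers `a` in the open interval `(u, v)`
that *are* divisible by `p`. -/
def Mp (p : ℕ) (u v : ℝ) : ℤ :=
  ∑ a ∈ (Finset.Icc 1 ⌈v⌉₊).filter
      (fun a : ℕ => u < (a : ℝ) ∧ (a : ℝ) < v ∧ p ∣ a),
    ArithmeticFunction.moebius a

/-- `Sx y u v` : the set of positive integers in the open interval `(u, v)` all of whose
prime divisors exceed `y`. -/
def Sx (y u v : ℝ) : Set ℕ :=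
  {a : ℕ | 0 < a ∧ u < (a : ℝ) ∧ (a : ℝ) < v ∧ ∀ q : ℕ, q.Prime → q ∣ a → y < (q : ℝ)}

/-- `Np x p` : the product of all primes `q < x` with `q ≠ p`. -/
def Np (x : ℝ) (p : ℕ) : ℕ :=
  ∏ q ∈ (Finset.range ⌈x⌉₊).filter (fun q : ℕ => q.Prime ∧ (q : ℝ) < x ∧ q ≠ p), q

/-- `Aset x j` : squarefree positive integers with exactly `j` prime factors,
all of them less than `x`. -/
def Aset (x : ℝ) (j : ℕ) : Finset ℕ :=
  (Finset.Icc 1 (⌈x⌉₊ ^ j)).filter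
    (fun a => Squarefree a ∧ a.primeFactors.card = j ∧ ∀ q ∈ a.primeFactors, (q : ℝ) < x)

/-- `Nint a b` : the number of integers in the open interval `(a, b)`. -/
def Nint (a b : ℝ) : ℕ :=
  (Finset.Ioo ⌊a⌋ ⌈b⌉).card

/-- `Rres a b = (b - a) - N(a, b)`. -/
def Rres (a b : ℝ) : ℝ :=
  (b - a) - Nint a b

/-- `piR t` : the number of primes `≤ t`. -/
def piR (t : ℝ) : ℕ :=
  Nat.primeCounting ⌊t⌋₊


lemma floor_tri (B t : ℝ) : ⌊B⌋ - ⌊B - t⌋ - ⌊t⌋ = if Int.fract B < Int.fract t then 1 else 0 := by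
  have h1 : B - t = ((⌊B⌋ - ⌊t⌋ : ℤ) : ℝ) + (Int.fract B - Int.fract t) := by
    have := Int.floor_add_fract B
    have := Int.floor_add_fract t
    push_cast
    linarith
  rw [h1, Int.floor_intCast_add]
  have hb0 := Int.fract_nonneg B
  have hb1 := Int.fract_lt_one B
  have ht0 := Int.fract_nonneg t
  have ht1 := Int.fract_lt_one t
  by_cases h : Int.fract B < Int.fract t
  · rw [if_pos h]
    have : ⌊Int.fract B - Int.fract t⌋ = -1 := by
      rw [Int.floor_eq_iff]
      push_cast
      constructor <;> linarith
    omega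
  · rw [if_neg h]
    have : ⌊Int.fract B - Int.fract t⌋ = 0 := by
      rw [Int.floor_eq_zero_iff]
      exact ⟨by linarith, by linarith⟩
    omega

lemma count_mult (u v : ℝ) (hu : 0 ≤ u) (d : ℕ) (hd : 0 < d) :
    ((Finset.Icc 1 ⌈v⌉₊).filter (fun n : ℕ => (u < (n:ℝ) ∧ (n:ℝ) < v) ∧ d ∣ n)).card
      = (Finset.Ioo ⌊u/(d:ℝ)⌋ ⌈v/(d:ℝ)⌉).card := by
  have hd' : (0:ℝ) < d := by exact_mod_cast hd
  apply Finset.card_bij (fun n _ => ((n / d : ℕ) : ℤ))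
  · rintro n hn
    simp only [mem_filter, Finset.mem_Icc, Finset.mem_Ioo] at hn ⊢
    obtain ⟨⟨h1, h2⟩, ⟨hu', hv'⟩, m, rfl⟩ := hn
    rw [Nat.mul_div_cancel_left m hd]
    push_cast at hu' hv' ⊢
    constructor
    · rw [Int.floor_lt]
      push_cast
      rw [div_lt_iff₀ hd']
      linarith [mul_comm (d:ℝ) (m:ℝ)]
    · rw [Int.lt_ceil]
      push_cast
      rw [lt_div_iff₀ hd']
      linarith [mul_comm (d:ℝ) (m:ℝ)]
  · rintro n1 hn1 n2 hn2 h
    simp only [mem_filter, Finset.mem_Icc] at hn1 hn2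
    obtain ⟨_, _, hd1⟩ := hn1
    obtain ⟨_, _, hd2⟩ := hn2
    have : n1 / d = n2 / d := by exact_mod_cast h
    rw [← Nat.div_mul_cancel hd1, ← Nat.div_mul_cancel hd2, this]
  · rintro m hm
    simp only [Finset.mem_Ioo] at hm
    obtain ⟨h1, h2⟩ := hm
    have hm0 : 0 < m := by
      have : (0:ℤ) ≤ ⌊u/(d:ℝ)⌋ := Int.floor_nonneg.2 (by positivity)
      omega
    refine ⟨d * m.toNat, ?_, ?_⟩
    · have hmu : u / d < (m.toNat : ℝ) := by
        rw [← Int.toNat_of_nonneg hm0.le] at h1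
        exact_mod_cast Int.floor_lt.mp h1
      have hmv : ((m.toNat : ℝ)) < v / d := by
        rw [← Int.toNat_of_nonneg hm0.le] at h2
        exact_mod_cast Int.lt_ceil.mp h2
      have hnv : ((d * m.toNat : ℕ) : ℝ) < v := by
        push_cast
        calc (d:ℝ) * m.toNat < d * (v/d) := by
              exact (mul_lt_mul_iff_right₀ hd').2 hmv
          _ = v := by field_simp
      simp only [mem_filter, Finset.mem_Icc]
      refine ⟨⟨?_, ?_⟩, ⟨?_, hnv⟩, ⟨m.toNat, rfl⟩⟩
      · have : 0 < m.toNat := by omega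
        exact Nat.one_le_iff_ne_zero.2 (by positivity)
      · have := hnv.le.trans (Nat.le_ceil v)
        exact_mod_cast Nat.cast_le.mp (by exact_mod_cast this)
      · push_cast
        calc u = d * (u/d) := by field_simp
          _ < d * m.toNat := (mul_lt_mul_iff_right₀ hd').2 hmu
    · rw [Nat.mul_div_cancel_left _ hd]
      omega

lemma moebius_gcd (n P : ℕ) (hn : n ≠ 0) (hP : P ≠ 0) :
    ∑ d ∈ (Nat.gcd n P).divisors, (moebius d : ℤ) = if Nat.Coprime n P then 1 else 0 := by
  have h1 : ((moebius * (ArithmeticFunction.zeta : ArithmeticFunction ℤ)) (Nat.gcd n P)) = ∑ d ∈ (Nat.gcd n P).divisors, (moebius d : ℤ) := by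
    rw [coe_mul_zeta_apply]
  rw [← h1, moebius_mul_coe_zeta, one_apply]

lemma gcd_divisors (n P : ℕ) (hn : n ≠ 0) (hP : P ≠ 0) :
    (Nat.gcd n P).divisors = P.divisors.filter (· ∣ n) := by
  ext d
  simp only [Nat.mem_divisors, mem_filter, Nat.dvd_gcd_iff]
  constructor
  · rintro ⟨⟨h1, h2⟩, _⟩; exact ⟨⟨h2, hP⟩, h1⟩
  · rintro ⟨⟨h1, _⟩, h2⟩; exact ⟨⟨h2, h1⟩, fun h => hn (by simpa using Nat.eq_zero_of_gcd_eq_zero_left h)⟩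

lemma legendre (u v : ℝ) (hu : 0 ≤ u) (P : ℕ) (hP : 0 < P) :
    (((Finset.Icc 1 ⌈v⌉₊).filter (fun n : ℕ => (u < (n:ℝ) ∧ (n:ℝ) < v) ∧ Nat.Coprime n P)).card : ℤ)
      = ∑ d ∈ P.divisors, (moebius d : ℤ) * ((Finset.Ioo ⌊u/(d:ℝ)⌋ ⌈v/(d:ℝ)⌉).card : ℤ) := by
  classical
  set T := (Finset.Icc 1 ⌈v⌉₊).filter (fun n : ℕ => u < (n:ℝ) ∧ (n:ℝ) < v) with hT
  have hTn : ∀ n ∈ T, n ≠ 0 := by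
    intro n hn
    simp only [hT, mem_filter, Finset.mem_Icc] at hn
    omega
  have step1 : (((Finset.Icc 1 ⌈v⌉₊).filter (fun n : ℕ => (u < (n:ℝ) ∧ (n:ℝ) < v) ∧ Nat.Coprime n P)).card : ℤ)
      = ∑ n ∈ T, if Nat.Coprime n P then (1:ℤ) else 0 := by
    rw [← Finset.filter_filter, ← hT]
    push_cast [Finset.card_filter]
    rfl
  rw [step1]
  have step2 : ∀ n ∈ T, (if Nat.Coprime n P then (1:ℤ) else 0)
      = ∑ d ∈ P.divisors, if d ∣ n then (moebius d : ℤ) else 0 := by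
    intro n hn
    rw [← moebius_gcd n P (hTn n hn) hP.ne', gcd_divisors n P (hTn n hn) hP.ne', Finset.sum_filter]
  rw [Finset.sum_congr rfl step2, Finset.sum_comm]
  apply Finset.sum_congr rfl
  intro d hd
  have hd0 : 0 < d := Nat.pos_of_mem_divisors hd
  rw [← count_mult u v hu d hd0, ← Finset.filter_filter, ← hT]
  rw [← Finset.sum_filter, Finset.sum_const, nsmul_eq_mul, mul_comm]

lemma squarefree_prod_primes {s : Finset ℕ} (h : ∀ q ∈ s, q.Prime) : Squarefree (∏ q ∈ s, q) := by
  classical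
  induction s using Finset.induction_on with
  | empty => simpa using squarefree_one
  | @insert a s ha ih =>
    rw [Finset.prod_insert ha, Nat.squarefree_mul_iff]
    have hap : a.Prime := h a (Finset.mem_insert_self a s)
    refine ⟨hap.coprime_iff_not_dvd.2 ?_, hap.squarefree, ih (fun q hq => h q (Finset.mem_insert_of_mem hq))⟩
    intro hdvd
    obtain ⟨r, hr, har⟩ := (hap.prime.dvd_finset_prod_iff _).1 hdvd
    have : a = r := ((Nat.prime_dvd_prime_iff_eq hap (h r (Finset.mem_insert_of_mem hr))).1 har)
    exact ha (this ▸ hr)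

lemma card_Ioo_int (α β : ℝ) (h : α < β) :
    ((Finset.Ioo ⌊α⌋ ⌈β⌉).card : ℤ) = ⌈β⌉ - ⌊α⌋ - 1 := by
  rw [Int.card_Ioo]
  have := Int.floor_lt_ceil_of_lt h
  omega

lemma irr_fract_ne (y : ℝ) (hy : Irrational y) : Int.fract y ≠ 0 := by
  intro h
  have : y = (⌊y⌋ : ℝ) := by
    have := Int.fract_add_floor y
    rw [h] at this
    linarith
  exact hy.ne_int ⌊y⌋ this

lemma ceil_eq_floor_add_one_of_fract_pos (y : ℝ) (h : 0 < Int.fract y) : ⌈y⌉ = ⌊y⌋ + 1 := by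
  rw [Int.ceil_eq_iff]
  have h2 := Int.fract_add_floor y
  constructor
  · push_cast
    linarith
  · push_cast
    have := Int.lt_floor_add_one y
    linarith

theorem stmt_12 (x : ℝ) (hx : 0 < x) (hxirr : Irrational x)
    (p : ℕ) (hp : p.Prime) (hpx : (p : ℝ) < x) (hxN : x < Np x p)
    (k : ℕ) (hk1 : 1 ≤ k) (hk2 : k ≤ p - 1) :
    ((Sx x ((k : ℝ) * Np x p - x) ((k : ℝ) * Np x p)).ncard : ℤ)
        - ((Sx x 0 x).ncard : ℤ)
      = ∑ a ∈ (Finset.Icc 1 ⌈(p : ℝ) * x⌉₊).filter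
          (fun a : ℕ => (a : ℝ) < (p : ℝ) * x ∧ p ∣ a ∧ Squarefree a ∧
            (∀ q ∈ a.primeFactors, (q : ℝ) < x) ∧
            Int.fract (((k : ℝ) * Np x p) / a) < Int.fract (x / a)),
          ArithmeticFunction.moebius a := by
  classical
  have hp2 := hp.two_le
  have hppos : 0 < p := hp.pos
  set N := Np x p with hNdef
  set t : Finset ℕ := (Finset.range ⌈x⌉₊).filter (fun q : ℕ => q.Prime ∧ (q:ℝ) < x) with ht
  have htprime : ∀ q ∈ t, q.Prime := by
    intro q hq
    simp only [ht, mem_filter] at hq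
    exact hq.2.1
  have hpt : p ∈ t := by
    simp only [ht, mem_filter, Finset.mem_range]
    exact ⟨Nat.lt_ceil.2 hpx, hp, hpx⟩
  set P := p * N with hPdef
  have hterase : (Finset.range ⌈x⌉₊).filter (fun q : ℕ => q.Prime ∧ (q:ℝ) < x ∧ q ≠ p) = t.erase p := by
    ext q
    simp only [ht, Finset.mem_erase, mem_filter, Finset.mem_range]
    tauto
  have hPN : P = ∏ q ∈ t, q := by
    rw [hPdef, hNdef]
    unfold Np
    rw [hterase]
    exact Finset.mul_prod_erase t (fun q => q) hpt
  have hPsf : Squarefree P := by rw [hPN]; exact squarefree_prod_primes htprime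
  have hPpos : 0 < P := Nat.pos_of_ne_zero hPsf.ne_zero
  have hNpos : 0 < N := by
    rcases Nat.eq_zero_or_pos N with h | h
    · rw [hPdef, h, mul_zero] at hPpos; omega
    · exact h
  have hPfac : P.primeFactors = t := by rw [hPN]; exact Nat.primeFactors_prod htprime
  have hpN : ¬ p ∣ N := by
    intro h
    rw [hNdef] at h
    unfold Np at h
    obtain ⟨q, hq, hpq⟩ := (hp.prime.dvd_finset_prod_iff _).1 h
    simp only [mem_filter, Finset.mem_range] at hq
    exact hq.2.2.2 ((Nat.prime_dvd_prime_iff_eq hp hq.2.1).1 hpq).symm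
  have hkN : ¬ p ∣ k * N := by
    intro h
    rcases (Nat.Prime.dvd_mul hp).1 h with h | h
    · have := Nat.le_of_dvd (by omega) h
      omega
    · exact hpN h
  have hkNR : x < (k:ℝ) * N := by
    calc x < (N:ℝ) := hxN
      _ ≤ (k:ℝ) * N := le_mul_of_one_le_left (by positivity) (by exact_mod_cast hk1)
  have hu2 : (0:ℝ) ≤ (k:ℝ) * N - x := by linarith
  -- coprimality characterization
  have hcop : ∀ n : ℕ, n ≠ 0 → ((∀ q : ℕ, q.Prime → q ∣ n → x < (q:ℝ)) ↔ Nat.Coprime n P) := by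
    intro n hn
    constructor
    · intro hall
      by_contra hc
      obtain ⟨q, hq, hqg⟩ := Nat.exists_prime_and_dvd hc
      have hqn : q ∣ n := hqg.trans (Nat.gcd_dvd_left n P)
      have hqP : q ∣ P := hqg.trans (Nat.gcd_dvd_right n P)
      have hqt : q ∈ t := hPfac ▸ Nat.mem_primeFactors.2 ⟨hq, hqP, hPpos.ne'⟩
      simp only [ht, mem_filter] at hqt
      linarith [hall q hq hqn, hqt.2.2]
    · intro hc q hq hqn
      by_contra hxq
      push_neg at hxq
      have hqx : (q:ℝ) < x := lt_of_le_of_ne hxq (fun h => hxirr.ne_nat q h.symm)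
      have hqt : q ∈ t := by
        simp only [ht, mem_filter, Finset.mem_range]
        exact ⟨Nat.lt_ceil.2 hqx, hq, hqx⟩
      have hqP : q ∣ P := by rw [hPN]; exact Finset.dvd_prod_of_mem _ hqt
      have : q ∣ 1 := hc ▸ Nat.dvd_gcd hqn hqP
      exact hq.one_lt.ne' (Nat.dvd_one.1 this)
  -- divisor characterization
  have hdvdP : ∀ a : ℕ, a ∣ P ↔ (Squarefree a ∧ ∀ q ∈ a.primeFactors, (q:ℝ) < x) := by
    intro a
    constructor
    · intro h
      refine ⟨hPsf.squarefree_of_dvd h, fun q hq => ?_⟩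
      have hq' : q ∈ P.primeFactors :=
        Nat.mem_primeFactors.2 ⟨Nat.prime_of_mem_primeFactors hq,
          (Nat.dvd_of_mem_primeFactors hq).trans h, hPpos.ne'⟩
      rw [hPfac] at hq'
      simp only [ht, mem_filter] at hq'
      exact hq'.2.2
    · rintro ⟨hsf, hfac⟩
      have hsub : a.primeFactors ⊆ t := by
        intro q hq
        simp only [ht, mem_filter, Finset.mem_range]
        exact ⟨Nat.lt_ceil.2 (hfac q hq), Nat.prime_of_mem_primeFactors hq, hfac q hq⟩
      have hdvd : (∏ q ∈ a.primeFactors, q) ∣ ∏ q ∈ t, q :=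
        Finset.prod_dvd_prod_of_subset _ _ _ hsub
      rw [Nat.prod_primeFactors_of_squarefree hsf] at hdvd
      rwa [hPN]
  -- Sx as finset cards
  have hSx : ∀ u v : ℝ, (Sx x u v).ncard
      = ((Finset.Icc 1 ⌈v⌉₊).filter (fun n : ℕ => (u < (n:ℝ) ∧ (n:ℝ) < v) ∧ Nat.Coprime n P)).card := by
    intro u v
    rw [← Set.ncard_coe_finset]
    congr 1
    ext n
    simp only [Sx, Set.mem_setOf_eq, Finset.mem_coe, Finset.mem_filter, Finset.mem_Icc]
    constructor
    · rintro ⟨h0, h1, h2, h3⟩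
      refine ⟨⟨h0, ?_⟩, ⟨h1, h2⟩, (hcop n h0.ne').1 h3⟩
      have : (n:ℝ) ≤ (⌈v⌉₊ : ℝ) := h2.le.trans (Nat.le_ceil v)
      exact_mod_cast this
    · rintro ⟨⟨h0, _⟩, ⟨h1, h2⟩, hc⟩
      exact ⟨h0, h1, h2, (hcop n (by omega)).2 hc⟩
  rw [hSx ((k:ℝ)*N - x) ((k:ℝ)*N), hSx 0 x,
    legendre ((k:ℝ)*N - x) ((k:ℝ)*N) hu2 P hPpos, legendre 0 x le_rfl P hPpos,
    ← Finset.sum_sub_distrib]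
  -- big exclusion lemma
  have hbig : ∀ d : ℕ, d ∣ P → p ∣ d → (p:ℝ) * x < d →
      ¬ (Int.fract ((k:ℝ) * N / d) < Int.fract (x / d)) := by
    rintro d hdP ⟨e, rfl⟩ hlt
    have hdP' : p * e ∣ p * N := by rwa [← hPdef]
    have heN : e ∣ N := (Nat.mul_dvd_mul_iff_left hppos).1 hdP'
    have hd0 : 0 < p * e := Nat.pos_of_dvd_of_pos hdP hPpos
    have he0 : 0 < e := Nat.pos_of_ne_zero fun h => by simp [h] at hd0
    have hxe : x < (e:ℝ) := by
      have h1 : (p:ℝ) * x < (p:ℝ) * e := by push_cast at hlt; linarith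
      have hp0R : (0:ℝ) < p := by exact_mod_cast hppos
      nlinarith
    have hdkN : ¬ (p * e) ∣ k * N := fun h => hkN ((dvd_mul_right p e).trans h)
    have hr0 : k * N % (p * e) ≠ 0 := fun h => hdkN (Nat.dvd_of_mod_eq_zero h)
    have herdvd : e ∣ k * N % (p * e) :=
      (Nat.dvd_mod_iff (dvd_mul_left e p)).2 (heN.mul_left k)
    have hrge : e ≤ k * N % (p * e) := Nat.le_of_dvd (Nat.pos_of_ne_zero hr0) herdvd
    have hcast : ((k:ℝ) * N) = ((k * N : ℕ) : ℝ) := by push_cast; ring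
    have hfr1 : Int.fract ((k:ℝ) * N / ((p*e : ℕ):ℝ)) = ((k * N % (p*e) : ℕ) : ℝ) / ((p*e : ℕ):ℝ) := by
      rw [hcast, Int.fract_div_natCast_eq_div_natCast_mod]
    have hdR : (0:ℝ) < ((p*e:ℕ):ℝ) := by exact_mod_cast hd0
    have hxpe : x < ((p*e:ℕ):ℝ) := by
      have : x ≤ (p:ℝ) * x := le_mul_of_one_le_left hx.le (by exact_mod_cast hppos)
      linarith
    have hfr2 : Int.fract (x / ((p*e:ℕ):ℝ)) = x / ((p*e:ℕ):ℝ) :=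
      Int.fract_eq_self.2 ⟨by positivity, by rw [div_lt_one hdR]; linarith⟩
    rw [hfr1, hfr2]
    intro hcon
    rw [div_lt_div_iff₀ hdR hdR] at hcon
    have : ((k * N % (p*e) : ℕ) : ℝ) < x := by nlinarith
    have : (e : ℝ) ≤ ((k * N % (p*e) : ℕ) : ℝ) := by exact_mod_cast hrge
    linarith
  -- per-divisor evaluation
  have key : ∀ d ∈ P.divisors,
      (ArithmeticFunction.moebius d : ℤ) * ((Finset.Ioo ⌊((k:ℝ)*N - x)/(d:ℝ)⌋ ⌈((k:ℝ)*N)/(d:ℝ)⌉).card : ℤ)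
        - (ArithmeticFunction.moebius d : ℤ) * ((Finset.Ioo ⌊(0:ℝ)/(d:ℝ)⌋ ⌈x/(d:ℝ)⌉).card : ℤ)
      = if p ∣ d ∧ Int.fract ((k:ℝ) * N / d) < Int.fract (x / d)
          then (ArithmeticFunction.moebius d : ℤ) else 0 := by
    intro d hd
    have hd0 : 0 < d := Nat.pos_of_mem_divisors hd
    have hdR : (0:ℝ) < d := by exact_mod_cast hd0
    have hdvd : d ∣ P := (Nat.mem_divisors.1 hd).1
    have hc2 : ((Finset.Ioo ⌊((k:ℝ)*N - x)/(d:ℝ)⌋ ⌈((k:ℝ)*N)/(d:ℝ)⌉).card : ℤ)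
        = ⌈((k:ℝ)*N)/(d:ℝ)⌉ - ⌊((k:ℝ)*N - x)/(d:ℝ)⌋ - 1 :=
      card_Ioo_int _ _ ((div_lt_div_iff_of_pos_right hdR).2 (by linarith))
    have hc1 : ((Finset.Ioo ⌊(0:ℝ)/(d:ℝ)⌋ ⌈x/(d:ℝ)⌉).card : ℤ)
        = ⌈x/(d:ℝ)⌉ - ⌊(0:ℝ)/(d:ℝ)⌋ - 1 :=
      card_Ioo_int _ _ ((div_lt_div_iff_of_pos_right hdR).2 (by linarith))
    have h00 : ⌊(0:ℝ)/(d:ℝ)⌋ = 0 := by rw [zero_div, Int.floor_zero]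
    rw [← mul_sub, hc2, hc1, h00]
    by_cases hpd : p ∣ d
    · -- p divides d
      have hdkN : ¬ d ∣ k * N := fun h => hkN (hpd.trans h)
      have hr0 : k * N % d ≠ 0 := fun h => hdkN (Nat.dvd_of_mod_eq_zero h)
      have hcast : ((k:ℝ) * N) = ((k * N : ℕ) : ℝ) := by push_cast; ring
      have hfrpos : 0 < Int.fract ((k:ℝ) * N / d) := by
        rw [hcast, Int.fract_div_natCast_eq_div_natCast_mod]
        have : 0 < k * N % d := Nat.pos_of_ne_zero hr0
        positivity
      have hceil2 : ⌈((k:ℝ)*N)/(d:ℝ)⌉ = ⌊((k:ℝ)*N)/(d:ℝ)⌋ + 1 :=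
        ceil_eq_floor_add_one_of_fract_pos _ hfrpos
      have hxd : Irrational (x / (d:ℝ)) := hxirr.div_natCast hd0.ne'
      have hfx : 0 < Int.fract (x / (d:ℝ)) :=
        lt_of_le_of_ne (Int.fract_nonneg _) (Ne.symm (irr_fract_ne _ hxd))
      have hceil1 : ⌈x/(d:ℝ)⌉ = ⌊x/(d:ℝ)⌋ + 1 :=
        ceil_eq_floor_add_one_of_fract_pos _ hfx
      have hsubdiv : ((k:ℝ)*N - x)/(d:ℝ) = ((k:ℝ)*N)/(d:ℝ) - x/(d:ℝ) := sub_div _ _ _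
      rw [hceil2, hceil1, hsubdiv]
      have htri := floor_tri (((k:ℝ)*N)/(d:ℝ)) (x/(d:ℝ))
      have : (⌊((k:ℝ)*N)/(d:ℝ)⌋ + 1 - ⌊((k:ℝ)*N)/(d:ℝ) - x/(d:ℝ)⌋ - 1)
          - (⌊x/(d:ℝ)⌋ + 1 - 0 - 1)
          = ⌊((k:ℝ)*N)/(d:ℝ)⌋ - ⌊((k:ℝ)*N)/(d:ℝ) - x/(d:ℝ)⌋ - ⌊x/(d:ℝ)⌋ := by ring
      rw [this, htri]
      simp only [hpd, true_and, mul_ite, mul_one, mul_zero]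
    · -- p does not divide d
      have hcopdp : Nat.Coprime d p := ((hp.coprime_iff_not_dvd).2 hpd).symm
      have hdN : d ∣ N := by
        have h1 : d ∣ N * p := by rw [mul_comm, ← hPdef]; exact hdvd
        exact hcopdp.dvd_of_dvd_mul_right h1
      obtain ⟨e, he⟩ := hdN
      have hBint : ((k:ℝ)*N)/(d:ℝ) = ((k*e : ℕ):ℝ) := by
        rw [he]; push_cast; field_simp
      have hsubdiv : ((k:ℝ)*N - x)/(d:ℝ) = ((k:ℝ)*N)/(d:ℝ) - x/(d:ℝ) := sub_div _ _ _
      rw [hsubdiv, hBint]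
      have hkec : ((k*e:ℕ):ℝ) = (((k*e:ℕ):ℤ):ℝ) := by push_cast; ring
      rw [hkec, Int.ceil_intCast]
      have hfl : ((((k*e:ℕ):ℤ)):ℝ) - x/(d:ℝ) = (((k*e:ℕ):ℤ):ℝ) + (-(x/(d:ℝ))) := by ring
      rw [hfl, Int.floor_intCast_add, Int.floor_neg]
      rw [if_neg (by tauto)]
      ring
  rw [Finset.sum_congr rfl key, ← Finset.sum_filter]
  -- final set identification
  have hset : P.divisors.filter
        (fun d : ℕ => p ∣ d ∧ Int.fract ((k:ℝ) * N / d) < Int.fract (x / d))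
      = (Finset.Icc 1 ⌈(p : ℝ) * x⌉₊).filter
          (fun a : ℕ => (a : ℝ) < (p : ℝ) * x ∧ p ∣ a ∧ Squarefree a ∧
            (∀ q ∈ a.primeFactors, (q : ℝ) < x) ∧
            Int.fract (((k : ℝ) * N) / a) < Int.fract (x / a)) := by
    ext a
    simp only [Finset.mem_filter, Nat.mem_divisors, Finset.mem_Icc]
    constructor
    · rintro ⟨⟨haP, _⟩, hpa, hfr⟩
      obtain ⟨hsf, hfac⟩ := (hdvdP a).1 haP
      have ha0 : 0 < a := Nat.pos_of_dvd_of_pos haP hPpos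
      have hapx : (a:ℝ) < (p:ℝ) * x := by
        by_contra hge
        push_neg at hge
        have hne : (p:ℝ) * x ≠ (a:ℝ) := (hxirr.natCast_mul hppos.ne').ne_nat a
        exact (hbig a haP hpa (lt_of_le_of_ne hge hne)) hfr
      have hale : a ≤ ⌈(p:ℝ)*x⌉₊ := by
        have : (a:ℝ) ≤ (⌈(p:ℝ)*x⌉₊ : ℝ) := hapx.le.trans (Nat.le_ceil _)
        exact_mod_cast this
      exact ⟨⟨ha0, hale⟩, hapx, hpa, hsf, hfac, hfr⟩
    · rintro ⟨⟨ha1, _⟩, hapx, hpa, hsf, hfac, hfr⟩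
      exact ⟨⟨(hdvdP a).2 ⟨hsf, hfac⟩, hPpos.ne'⟩, hpa, hfr⟩
  rw [hset]

end
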